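/- For a connected undirected graph, the effective resistance defined via the Lyapunov equation, r_{ij} = (e_i − e_j)ᵀ X (e_i − e_j) with X = 2QᵀΣQ and L̄Σ + ΣL̄ᵀ = I, coincides with the classical resistance distance (e_i − e_j)ᵀ L_u⁺ (e_i − e_j). -/

import Mathlib

open Matrix

/-- The four Moore–Penrose conditions characterizing the pseudoinverse. -/
def IsMoorePenrose {m : Type*} [Fintype m] [DecidableEq m]
    (A B : Matrix m m ℝ) : Prop :=
  A * B * A = A ∧ B * A * B = B ∧ (A * B)ᵀ = A * B ∧ (B * A)ᵀ = B * A

lemma mp_unique {m : Type*} [Fintype m] [DecidableEq m]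
    {A B C : Matrix m m ℝ} (hB : IsMoorePenrose A B) (hC : IsMoorePenrose A C) :
    B = C := by
  obtain ⟨hB1, hB2, hB3, hB4⟩ := hB
  obtain ⟨hC1, hC2, hC3, hC4⟩ := hC
  have hAB : A * B = A * C := by
    calc A * B = (A * C * A) * B := by rw [hC1]
    _ = (A * C) * (A * B) := by rw [mul_assoc]
    _ = (A * C)ᵀ * (A * B)ᵀ := by rw [hC3, hB3]
    _ = ((A * B) * (A * C))ᵀ := by rw [← transpose_mul]
    _ = ((A * B * A) * C)ᵀ := by rw [mul_assoc (A * B) A C]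
    _ = (A * C)ᵀ := by rw [hB1]
    _ = A * C := hC3
  have hBA : B * A = C * A := by
    calc B * A = B * (A * C * A) := by rw [hC1]
    _ = (B * A) * (C * A) := by
        rw [← mul_assoc B (A * C) A, ← mul_assoc B A C, mul_assoc (B * A) C A]
    _ = (B * A)ᵀ * (C * A)ᵀ := by rw [hC4, hB4]
    _ = ((C * A) * (B * A))ᵀ := by rw [← transpose_mul]
    _ = (C * (A * B * A))ᵀ := by rw [mul_assoc C A (B * A), ← mul_assoc A B A]
    _ = (C * A)ᵀ := by rw [hB1]
    _ = C * A := hC4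
  calc B = B * A * B := hB2.symm
  _ = B * (A * C) := by rw [mul_assoc, hAB]
  _ = (B * A) * C := by rw [mul_assoc]
  _ = C * A * C := by rw [hBA]
  _ = C := hC2

/-- A real positive semidefinite matrix with zero trace is zero. -/
lemma psd_trace_zero {m : Type*} [Fintype m] [DecidableEq m]
    {N : Matrix m m ℝ} (hN : N.PosSemidef) (htr : trace N = 0) : N = 0 := by
  have hdiag : ∀ i, N i i = Pi.single i 1 ⬝ᵥ N *ᵥ Pi.single i 1 := by
    intro i
    rw [mulVec_single, single_dotProduct]
    simp
  have hnonneg : ∀ i ∈ Finset.univ, (0:ℝ) ≤ N i i := by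
    intro i _
    rw [hdiag i]
    simpa using hN.dotProduct_mulVec_nonneg (Pi.single i 1)
  have hzero : ∀ i, N i i = 0 := by
    intro i
    have := (Finset.sum_eq_zero_iff_of_nonneg hnonneg).mp htr
    exact this i (Finset.mem_univ i)
  have hcol : ∀ i, N *ᵥ Pi.single i 1 = 0 := by
    intro i
    apply (hN.dotProduct_mulVec_zero_iff (Pi.single i 1)).mp
    simp only [star_trivial]
    rw [← hdiag i, hzero i]
  ext j i
  have := congrFun (hcol i) j
  simpa [mulVec_single] using this

/-- Lyapunov uniqueness: if `L` is positive definite, `D` symmetric and `L*D + D*L = 0`,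
then `D = 0`. -/
lemma lyap_zero {m : Type*} [Fintype m] [DecidableEq m]
    {L D : Matrix m m ℝ} (hL : L.PosDef) (hDsym : Dᵀ = D)
    (h : L * D + D * L = 0) : D = 0 := by
  have hNpsd : (Dᵀ * L * D).PosSemidef := by
    have := hL.posSemidef.conjTranspose_mul_mul_same D
    simpa [conjTranspose_eq_transpose_of_trivial] using this
  have htr : trace (Dᵀ * L * D) = 0 := by
    rw [hDsym]
    have h0 : trace ((L * D + D * L) * D) = 0 := by rw [h, zero_mul, trace_zero]
    have hc : trace (L * D * D) = trace (D * L * D) := by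
      rw [trace_mul_comm (L * D) D, mul_assoc]
    have hsum : trace (L * D * D) + trace (D * L * D) = 0 := by
      rw [← trace_add, ← add_mul]; exact h0
    linarith
  have hN0 : Dᵀ * L * D = 0 := psd_trace_zero hNpsd htr
  ext k i
  have hci : D *ᵥ Pi.single i 1 = 0 := by
    by_contra hne
    have hpos := hL.dotProduct_mulVec_pos hne
    have hz : star (D *ᵥ Pi.single i 1) ⬝ᵥ L *ᵥ (D *ᵥ Pi.single i 1) = 0 := by
      have hv : (Dᵀ * L * D) *ᵥ Pi.single i 1 = 0 := by rw [hN0, zero_mulVec]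
      have h1 : Pi.single i 1 ⬝ᵥ Dᵀ *ᵥ (L *ᵥ (D *ᵥ Pi.single i 1)) = 0 := by
        rw [mulVec_mulVec, mulVec_mulVec, hv, dotProduct_zero]
      have h2 : Pi.single i 1 ⬝ᵥ Dᵀ *ᵥ (L *ᵥ (D *ᵥ Pi.single i 1)) =
          (D *ᵥ Pi.single i 1) ⬝ᵥ (L *ᵥ (D *ᵥ Pi.single i 1)) := by
        rw [dotProduct_mulVec, vecMul_transpose]
      rw [star_trivial, ← h2, h1]
    rw [hz] at hpos
    exact lt_irrefl _ hpos
  simpa [mulVec_single] using congrFun hci k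

/-- For a connected undirected graph, effective resistance defined via the
Lyapunov equation coincides with the classical resistance distance `(eᵢ-eⱼ)ᵀ Lu⁺ (eᵢ-eⱼ)`. -/
theorem effective_resistance_eq_resistance_distance {n : ℕ} (hn : 0 < n)
    (Lu : Matrix (Fin n) (Fin n) ℝ) (hsym : Luᵀ = Lu) (hpsd : Lu.PosSemidef)
    (hrow : Lu *ᵥ (1 : Fin n → ℝ) = 0) (hrank : Lu.rank = n - 1)
    (Q : Matrix (Fin (n - 1)) (Fin n) ℝ)
    (hQ1 : Q *ᵥ (1 : Fin n → ℝ) = 0) (hQQ : Q * Qᵀ = 1)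
    (hQP : Qᵀ * Q = 1 - (n : ℝ)⁻¹ • Matrix.of (fun _ _ => (1 : ℝ)))
    (S : Matrix (Fin (n - 1)) (Fin (n - 1)) ℝ)
    (hS : (Q * Lu * Qᵀ) * S + S * (Q * Lu * Qᵀ)ᵀ = 1)
    (B : Matrix (Fin n) (Fin n) ℝ) (hB : IsMoorePenrose Lu B) :
    ∀ i j : Fin n,
      (Pi.single i 1 - Pi.single j 1) ⬝ᵥ
          (((2 : ℝ) • (Qᵀ * S * Q)) *ᵥ (Pi.single i 1 - Pi.single j 1)) =
      (Pi.single i 1 - Pi.single j 1) ⬝ᵥ (B *ᵥ (Pi.single i 1 - Pi.single j 1)) := by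
  have hone_ne : (1 : Fin n → ℝ) ≠ 0 := by
    intro h
    have := congrFun h ⟨0, hn⟩
    simpa using this
  -- kernel of Lu is spanned by the all-ones vector
  have hker : ∀ v : Fin n → ℝ, Lu *ᵥ v = 0 → ∃ c : ℝ, v = c • (1 : Fin n → ℝ) := by
    intro v hv
    have h1 := LinearMap.finrank_range_add_finrank_ker Lu.mulVecLin
    have h2 : Module.finrank ℝ (Fin n → ℝ) = n := by simp
    have h3 : Module.finrank ℝ (LinearMap.range Lu.mulVecLin) = n - 1 := hrank
    have hfr : Module.finrank ℝ (LinearMap.ker Lu.mulVecLin) = 1 := by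
      rw [h2, h3] at h1; omega
    have hmem : (1 : Fin n → ℝ) ∈ LinearMap.ker Lu.mulVecLin := by
      simpa [LinearMap.mem_ker, Matrix.mulVecLin_apply] using hrow
    have hspan : Submodule.span ℝ {(1 : Fin n → ℝ)} ≤ LinearMap.ker Lu.mulVecLin :=
      Submodule.span_le.mpr (by simpa using hmem)
    have heq : Submodule.span ℝ {(1 : Fin n → ℝ)} = LinearMap.ker Lu.mulVecLin :=
      Submodule.eq_of_le_of_finrank_le hspan
        (by rw [hfr, finrank_span_singleton hone_ne])
    have hvmem : v ∈ Submodule.span ℝ {(1 : Fin n → ℝ)} := by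
      rw [heq]
      simpa [LinearMap.mem_ker, Matrix.mulVecLin_apply] using hv
    obtain ⟨c, hc⟩ := Submodule.mem_span_singleton.mp hvmem
    exact ⟨c, hc.symm⟩
  set Lb : Matrix (Fin (n-1)) (Fin (n-1)) ℝ := Q * Lu * Qᵀ with hLb
  have hLbT : Lbᵀ = Lb := by
    rw [hLb, transpose_mul, transpose_mul, transpose_transpose, hsym, ← Matrix.mul_assoc]
  -- positive definiteness of Lb
  have hLbPD : Lb.PosDef := by
    refine Matrix.PosDef.of_dotProduct_mulVec_pos ?_ ?_
    · show Lbᴴ = Lb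
      have : Lbᴴ = Lbᵀ := by ext a b; simp [conjTranspose_apply]
      rw [this, hLbT]
    · intro x hx
      have key : star x ⬝ᵥ Lb *ᵥ x = (Qᵀ *ᵥ x) ⬝ᵥ Lu *ᵥ (Qᵀ *ᵥ x) := by
        rw [star_trivial, hLb, ← mulVec_mulVec, ← mulVec_mulVec,
          dotProduct_mulVec x Q, ← mulVec_transpose, dotProduct_mulVec (Qᵀ *ᵥ x) Lu,
          dotProduct_mulVec]
      rw [key]
      have hnn : 0 ≤ (Qᵀ *ᵥ x) ⬝ᵥ Lu *ᵥ (Qᵀ *ᵥ x) := by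
        simpa using hpsd.dotProduct_mulVec_nonneg (Qᵀ *ᵥ x)
      rcases hnn.lt_or_eq with hlt | heq0
      · exact hlt
      · exfalso
        have hz : Lu *ᵥ (Qᵀ *ᵥ x) = 0 := by
          apply (hpsd.dotProduct_mulVec_zero_iff (Qᵀ *ᵥ x)).mp
          rw [star_trivial, ← heq0]
        obtain ⟨c, hc⟩ := hker _ hz
        apply hx
        have : Q *ᵥ (Qᵀ *ᵥ x) = x := by
          rw [mulVec_mulVec, hQQ, Matrix.one_mulVec]
        rw [← this, hc, mulVec_smul, hQ1, smul_zero]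
  -- invertibility of Lb
  have hdet : IsUnit Lb.det := hLbPD.det_pos.ne'.isUnit
  have hinv : Lb * Lb⁻¹ = 1 := mul_nonsing_inv _ hdet
  have hinv' : Lb⁻¹ * Lb = 1 := nonsing_inv_mul _ hdet
  have hinvT : (Lb⁻¹)ᵀ = Lb⁻¹ := by
    rw [transpose_nonsing_inv, hLbT]
  -- Lu * (QᵀQ) = Lu and (QᵀQ) * Lu = Lu
  have hsym' : ∀ a b, Lu a b = Lu b a := by
    intro a b
    rw [← congrFun (congrFun hsym a) b, Matrix.transpose_apply]
  have hLuJ : Lu * (Matrix.of fun _ _ => (1:ℝ)) = 0 := by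
    ext a b
    have := congrFun hrow a
    simpa [Matrix.mul_apply, Matrix.mulVec, dotProduct] using this
  have hJLu : (Matrix.of fun _ _ => (1:ℝ)) * Lu = 0 := by
    ext a b
    have := congrFun hrow b
    simp only [Matrix.mul_apply, Matrix.of_apply, one_mul, Matrix.zero_apply]
    rw [Finset.sum_congr rfl (fun k _ => hsym' k b)]
    simpa [Matrix.mulVec, dotProduct] using this
  have hLuP : Lu * (Qᵀ * Q) = Lu := by
    rw [hQP, mul_sub, mul_one, Matrix.mul_smul, hLuJ, smul_zero, sub_zero]
  have hPLu : (Qᵀ * Q) * Lu = Lu := by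
    rw [hQP, sub_mul, Matrix.one_mul, Matrix.smul_mul, hJLu, smul_zero, sub_zero]
  have hLu_eq : Qᵀ * Lb * Q = Lu := by
    have e : Qᵀ * Lb * Q = ((Qᵀ * Q) * Lu) * (Qᵀ * Q) := by
      rw [hLb]; simp only [Matrix.mul_assoc]
    rw [e, hPLu, hLuP]
  set M : Matrix (Fin n) (Fin n) ℝ := Qᵀ * Lb⁻¹ * Q with hM
  have hLuM : Lu * M = Qᵀ * Q := by
    have e : Lu * M = Qᵀ * (Lb * ((Q * Qᵀ) * (Lb⁻¹ * Q))) := by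
      rw [← hLu_eq, hM]; simp only [Matrix.mul_assoc]
    rw [e, hQQ, Matrix.one_mul, ← Matrix.mul_assoc Lb Lb⁻¹ Q, hinv, Matrix.one_mul]
  have hMLu : M * Lu = Qᵀ * Q := by
    have e : M * Lu = Qᵀ * (Lb⁻¹ * ((Q * Qᵀ) * (Lb * Q))) := by
      rw [← hLu_eq, hM]; simp only [Matrix.mul_assoc]
    rw [e, hQQ, Matrix.one_mul, ← Matrix.mul_assoc Lb⁻¹ Lb Q, hinv', Matrix.one_mul]
  have hPsym : (Qᵀ * Q)ᵀ = Qᵀ * Q := by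
    rw [transpose_mul, transpose_transpose]
  have hMP : IsMoorePenrose Lu M := by
    refine ⟨?_, ?_, ?_, ?_⟩
    · rw [hLuM, hPLu]
    · rw [hMLu]
      have e : (Qᵀ * Q) * M = Qᵀ * ((Q * Qᵀ) * (Lb⁻¹ * Q)) := by
        rw [hM]; simp only [Matrix.mul_assoc]
      rw [e, hQQ, Matrix.one_mul, hM, Matrix.mul_assoc]
    · rw [hLuM]; exact hPsym
    · rw [hMLu]; exact hPsym
  have hBM : B = M := mp_unique hB hMP
  -- Lyapunov equation: S + Sᵀ = Lb⁻¹
  rw [hLbT] at hS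
  have hS' : Lb * Sᵀ + Sᵀ * Lb = 1 := by
    have := congrArg transpose hS
    rw [transpose_add, transpose_mul Lb S, transpose_mul S Lb, hLbT, transpose_one] at this
    rw [add_comm]
    exact this
  have hlyap : Lb * (S + Sᵀ - Lb⁻¹) + (S + Sᵀ - Lb⁻¹) * Lb = 0 := by
    have expand : Lb * (S + Sᵀ - Lb⁻¹) + (S + Sᵀ - Lb⁻¹) * Lb =
        ((Lb * S + S * Lb) + (Lb * Sᵀ + Sᵀ * Lb)) - (Lb * Lb⁻¹ + Lb⁻¹ * Lb) := by
      rw [mul_sub, sub_mul, mul_add, add_mul]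
      abel
    rw [expand, hS, hS', hinv, hinv']
    abel
  have hDsym : (S + Sᵀ - Lb⁻¹)ᵀ = S + Sᵀ - Lb⁻¹ := by
    rw [transpose_sub, transpose_add, transpose_transpose, hinvT, add_comm Sᵀ S]
  have hT : S + Sᵀ = Lb⁻¹ := by
    have := lyap_zero hLbPD hDsym hlyap
    rwa [sub_eq_zero] at this
  -- conclusion
  intro i j
  set v : Fin n → ℝ := Pi.single i 1 - Pi.single j 1 with hv
  have hflip : ∀ A : Matrix (Fin n) (Fin n) ℝ, v ⬝ᵥ Aᵀ *ᵥ v = v ⬝ᵥ A *ᵥ v := by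
    intro A
    rw [dotProduct_mulVec, vecMul_transpose, dotProduct_comm]
  have htr2 : (Qᵀ * S * Q)ᵀ = Qᵀ * Sᵀ * Q := by
    rw [transpose_mul, transpose_mul, transpose_transpose, ← Matrix.mul_assoc]
  have hrhs : v ⬝ᵥ B *ᵥ v = v ⬝ᵥ (Qᵀ * S * Q) *ᵥ v + v ⬝ᵥ (Qᵀ * Sᵀ * Q) *ᵥ v := by
    rw [hBM, hM, ← hT]
    have e : Qᵀ * (S + Sᵀ) * Q = Qᵀ * S * Q + Qᵀ * Sᵀ * Q := by
      rw [Matrix.mul_add, Matrix.add_mul]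
    rw [e, add_mulVec, dotProduct_add]
  rw [hrhs, ← htr2, hflip, smul_mulVec, dotProduct_smul, two_smul]
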